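/- Let $B$ be an $(m+1)\times m$ matrix over a commutative ring ($m\ge 2$), let $r_1<r_2<r_3$ be row indices and $c_1$ a column index. Then $\det B_{\hat r_1}\cdot \det B_{\hat r_2\hat r_3}^{\hat c_1} = \det B_{\hat r_2}\cdot \det B_{\hat r_1\hat r_3}^{\hat c_1} - \det B_{\hat r_3}\cdot \det B_{\hat r_1\hat r_2}^{\hat c_1}$. -/

import Mathlib

open Matrix

theorem fin_succAbove_val {n : ℕ} (p : Fin (n+1)) (j : Fin n) :
    ((p.succAbove j : Fin (n+1)) : ℕ) = if (j:ℕ) < (p:ℕ) then (j:ℕ) else (j:ℕ)+1 := by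
  rcases lt_or_ge (Fin.castSucc j) p with h | h
  · rw [Fin.succAbove_of_castSucc_lt _ _ h]
    have h' : (j:ℕ) < (p:ℕ) := h
    simp [h']
  · rw [Fin.succAbove_of_le_castSucc _ _ h]
    have h' : (p:ℕ) ≤ (j:ℕ) := h
    rw [if_neg (by omega)]
    simp

theorem det_updateRow_finset_sum {R : Type*} [CommRing R] {n : ℕ} {α : Type*}
    (M : Matrix (Fin n) (Fin n) R) (j : Fin n) (s : Finset α) (v : α → (Fin n → R)) :
    (M.updateRow j (∑ a ∈ s, v a)).det = ∑ a ∈ s, (M.updateRow j (v a)).det := by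
  classical
  induction s using Finset.induction with
  | empty =>
      simp only [Finset.sum_empty]
      exact Matrix.det_eq_zero_of_row_eq_zero j (by simp)
  | insert _ _ has ih =>
      rw [Finset.sum_insert has, Matrix.det_updateRow_add, ih, Finset.sum_insert has]

section DJ

variable {R : Type*} [CommRing R] {k : ℕ} (B : Matrix (Fin (k+3)) (Fin (k+2)) R)
  (d : Fin k → Fin (k+3)) (c1 : Fin (k+2))

/-- the small matrix with row `x` on top and rows `B (d t)` below, column `c1` deleted -/
def gmat (x : Fin (k+2) → R) : Matrix (Fin (k+1)) (Fin (k+1)) R :=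
  Matrix.of (Fin.cons (x ∘ c1.succAbove) (fun t => B (d t) ∘ c1.succAbove))

def gdet (x : Fin (k+2) → R) : R := (gmat B d c1 x).det

theorem gmat_eq_updateRow (x y : Fin (k+2) → R) :
    gmat B d c1 y = (gmat B d c1 x).updateRow 0 (y ∘ c1.succAbove) := by
  ext a b
  refine Fin.cases ?_ (fun t => ?_) a
  · simp [gmat]
  · rw [Matrix.updateRow_ne (Fin.succ_ne_zero t)]
    simp [gmat]

theorem gdet_linear (x : Fin (k+2) → R) :
    gdet B d c1 x = ∑ t : Fin (k+2), x t * gdet B d c1 (fun s => if s = t then 1 else 0) := by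
  classical
  have h2 : x ∘ c1.succAbove =
      ∑ t : Fin (k+2), x t • ((fun s => if s = t then (1:R) else 0) ∘ c1.succAbove) := by
    funext b
    simp only [Finset.sum_apply, Pi.smul_apply, Function.comp_apply, smul_eq_mul, mul_ite,
      mul_one, mul_zero]
    rw [Finset.sum_ite_eq]
    simp
  rw [gdet, gmat_eq_updateRow B d c1 x x, h2, det_updateRow_finset_sum]
  refine Finset.sum_congr rfl fun t _ => ?_
  rw [Matrix.det_updateRow_smul, ← gmat_eq_updateRow B d c1 x]
  rfl

theorem gdet_eq_zero (i : Fin (k+3)) (t : Fin k) (hdt : d t = i) :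
    gdet B d c1 (B i) = 0 := by
  refine Matrix.det_zero_of_row_eq (Fin.succ_ne_zero t).symm ?_
  funext b
  simp [gmat, hdt]

theorem gdet_perm (p : Fin (k+1)) (e : Fin (k+1) → Fin (k+3)) (i : Fin (k+3))
    (hep : e p = i) (hed : ∀ t, e (p.succAbove t) = d t) :
    gdet B d c1 (B i) = (-1)^(p:ℕ) * (B.submatrix e c1.succAbove).det := by
  have hmat : gmat B d c1 (B i) =
      (B.submatrix e c1.succAbove).submatrix (⇑p.cycleRange.symm) id := by
    ext a b
    refine Fin.cases ?_ (fun t => ?_) a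
    · simp [gmat, Fin.cycleRange_symm_zero, hep]
    · simp [gmat, Fin.cycleRange_symm_succ, hed]
  rw [gdet, hmat, Matrix.det_permute]
  congr 1
  have : Equiv.Perm.sign p.cycleRange.symm = (-1)^(p:ℕ) := by
    rw [Equiv.Perm.sign_symm, Fin.sign_cycleRange]
  rw [this]
  push_cast
  ring

theorem sum_expansion :
    ∑ i : Fin (k+3),
      (-1:R)^((i:ℕ) + (k+2)) * gdet B d c1 (B i) * (B.submatrix i.succAbove id).det = 0 := by
  classical
  set γ : Fin (k+2) → R := fun t => gdet B d c1 (fun s => if s = t then 1 else 0) with hγ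
  set B1 : Matrix (Fin (k+3)) (Fin (k+3)) R :=
    Matrix.of (fun i c => if h : (c:ℕ) < k+2 then B i ⟨c, h⟩ else 0) with hB1
  set L1 : Matrix (Fin (k+3)) (Fin (k+3)) R :=
    Matrix.of (fun t c => if h : (t:ℕ) < k+2 then
      (if (c:ℕ) < k+2 then (if (t:ℕ) = (c:ℕ) then 1 else 0) else γ ⟨t, h⟩) else 0) with hL1
  have hrow : ∀ (i : Fin (k+3)) (u : Fin (k+2)), B1 i (Fin.castSucc u) = B i u := by
    intro i u
    simp only [hB1, Matrix.of_apply, Fin.coe_castSucc]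
    rw [dif_pos u.isLt]
  have hlast0 : ∀ i : Fin (k+3), B1 i (Fin.last (k+2)) = 0 := by
    intro i
    simp [hB1]
  have hmul : ∀ (i : Fin (k+3)) (c : Fin (k+3)),
      (B1 * L1) i c = ∑ u : Fin (k+2), B i u * L1 (Fin.castSucc u) c := by
    intro i c
    rw [Matrix.mul_apply, Fin.sum_univ_castSucc, hlast0, zero_mul, add_zero]
    refine Finset.sum_congr rfl fun u _ => by rw [hrow]
  have hMcol : ∀ (i : Fin (k+3)) (b : Fin (k+2)), (B1 * L1) i (Fin.castSucc b) = B i b := by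
    intro i b
    rw [hmul]
    have : ∀ u : Fin (k+2), L1 (Fin.castSucc u) (Fin.castSucc b) = if u = b then 1 else 0 := by
      intro u
      simp only [hL1, Matrix.of_apply, Fin.coe_castSucc]
      rw [dif_pos u.isLt, if_pos b.isLt]
      simp [Fin.val_eq_val]
    simp only [this, mul_ite, mul_one, mul_zero]
    simp
  have hMlast : ∀ i : Fin (k+3), (B1 * L1) i (Fin.last (k+2)) = gdet B d c1 (B i) := by
    intro i
    rw [hmul, gdet_linear B d c1 (B i)]
    refine Finset.sum_congr rfl fun u _ => ?_
    congr 1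
    simp only [hL1, Matrix.of_apply, Fin.coe_castSucc, Fin.val_last]
    rw [dif_pos u.isLt, if_neg (by omega)]
  have hdet : (B1 * L1).det = 0 := by
    rw [Matrix.det_mul]
    have : B1.det = 0 := Matrix.det_eq_zero_of_column_eq_zero (Fin.last (k+2)) hlast0
    rw [this, zero_mul]
  have hexp := Matrix.det_succ_column (B1 * L1) (Fin.last (k+2))
  rw [hdet] at hexp
  have hsub : ∀ i : Fin (k+3),
      (B1 * L1).submatrix i.succAbove (Fin.last (k+2)).succAbove = B.submatrix i.succAbove id := by
    intro i
    ext a b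
    rw [Matrix.submatrix_apply, Matrix.submatrix_apply, Fin.succAbove_last_apply, id_eq]
    exact hMcol _ b
  calc ∑ i : Fin (k+3),
      (-1:R)^((i:ℕ) + (k+2)) * gdet B d c1 (B i) * (B.submatrix i.succAbove id).det
      = ∑ i : Fin (k+3), (-1:R)^((i:ℕ) + ((Fin.last (k+2)):ℕ)) * (B1*L1) i (Fin.last (k+2)) *
          ((B1*L1).submatrix i.succAbove (Fin.last (k+2)).succAbove).det := by
        refine Finset.sum_congr rfl fun i _ => ?_
        rw [hMlast, hsub, Fin.val_last]
    _ = 0 := hexp.symm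

end DJ

set_option maxHeartbeats 1000000 in
theorem dj_core {R : Type*} [CommRing R] {k : ℕ}
    (B : Matrix (Fin (k+3)) (Fin (k+2)) R)
    (r1 r2 r3 : Fin (k+3)) (h12 : r1 < r2) (h23 : r2 < r3) (c1 : Fin (k+2))
    (r1' r2' : Fin (k+2)) (p1 p2 p3 : Fin (k+1))
    (hv1 : (r1':ℕ) = (r1:ℕ)) (hv2 : (r2':ℕ) = (r2:ℕ))
    (hvp1 : (p1:ℕ) = (r1:ℕ)) (hvp2 : (p2:ℕ) = (r2:ℕ) - 1) (hvp3 : (p3:ℕ) = (r3:ℕ) - 2) :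
    (B.submatrix r1.succAbove id).det *
      (B.submatrix (r3.succAbove ∘ r2'.succAbove) c1.succAbove).det =
    (B.submatrix r2.succAbove id).det *
      (B.submatrix (r3.succAbove ∘ r1'.succAbove) c1.succAbove).det -
    (B.submatrix r3.succAbove id).det *
      (B.submatrix (r2.succAbove ∘ r1'.succAbove) c1.succAbove).det := by
  classical
  have h12' : (r1:ℕ) < (r2:ℕ) := h12
  have h23' : (r2:ℕ) < (r3:ℕ) := h23
  have h3 : (r3:ℕ) < k+3 := r3.isLt
  set d : Fin k → Fin (k+3) := fun t => r3.succAbove (r2'.succAbove (p1.succAbove t)) with hd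
  -- enumeration facts
  have hep1 : (r3.succAbove ∘ r2'.succAbove) p1 = r1 := by
    apply Fin.ext
    simp only [Function.comp_apply, fin_succAbove_val]
    split_ifs <;> omega
  have hep2 : (r3.succAbove ∘ r1'.succAbove) p2 = r2 := by
    apply Fin.ext
    simp only [Function.comp_apply, fin_succAbove_val]
    split_ifs <;> omega
  have hep3 : (r2.succAbove ∘ r1'.succAbove) p3 = r3 := by
    apply Fin.ext
    simp only [Function.comp_apply, fin_succAbove_val]
    split_ifs <;> omega
  have hr3r2 : r3.succAbove r2' = r2 := by
    apply Fin.ext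
    simp only [fin_succAbove_val]
    split_ifs <;> omega
  have hed2 : ∀ t, (r3.succAbove ∘ r1'.succAbove) (p2.succAbove t) = d t := by
    intro t
    apply Fin.ext
    simp only [Function.comp_apply, hd, fin_succAbove_val]
    split_ifs <;> omega
  have hed3 : ∀ t, (r2.succAbove ∘ r1'.succAbove) (p3.succAbove t) = d t := by
    intro t
    apply Fin.ext
    simp only [Function.comp_apply, hd, fin_succAbove_val]
    split_ifs <;> omega
  -- the three evaluations of gdet
  have hg1 := gdet_perm B d c1 p1 (r3.succAbove ∘ r2'.succAbove) r1 hep1 (fun t => rfl)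
  have hg2 := gdet_perm B d c1 p2 (r3.succAbove ∘ r1'.succAbove) r2 hep2 hed2
  have hg3 := gdet_perm B d c1 p3 (r2.succAbove ∘ r1'.succAbove) r3 hep3 hed3
  -- abbreviations
  set Q23 : R := (B.submatrix (r3.succAbove ∘ r2'.succAbove) c1.succAbove).det with hQ23
  set Q13 : R := (B.submatrix (r3.succAbove ∘ r1'.succAbove) c1.succAbove).det with hQ13
  set Q12 : R := (B.submatrix (r2.succAbove ∘ r1'.succAbove) c1.succAbove).det with hQ12
  set P1 : R := (B.submatrix r1.succAbove id).det with hP1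
  set P2 : R := (B.submatrix r2.succAbove id).det with hP2
  set P3 : R := (B.submatrix r3.succAbove id).det with hP3
  set f : Fin (k+3) → R := fun i =>
    (-1:R)^((i:ℕ) + (k+2)) * gdet B d c1 (B i) * (B.submatrix i.succAbove id).det with hf
  have hsum : ∑ i : Fin (k+3), f i = 0 := sum_expansion B d c1
  have hne12 : r1 ≠ r2 := ne_of_lt h12
  have hne13 : r1 ≠ r3 := ne_of_lt (lt_trans h12 h23)
  have hne23 : r2 ≠ r3 := ne_of_lt h23
  have h0 : ∑ i ∈ ({r1, r2, r3} : Finset (Fin (k+3))), f i = ∑ i : Fin (k+3), f i := by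
    apply Finset.sum_subset (Finset.subset_univ _)
    intro i _ hi
    simp only [Finset.mem_insert, Finset.mem_singleton, not_or] at hi
    obtain ⟨hi1, hi2, hi3⟩ := hi
    obtain ⟨a, ha⟩ := Fin.exists_succAbove_eq hi3
    have ha2 : a ≠ r2' := by
      intro h
      exact hi2 (by rw [← ha, h, hr3r2])
    obtain ⟨b, hb⟩ := Fin.exists_succAbove_eq ha2
    have hbp : b ≠ p1 := by
      intro h
      apply hi1
      rw [← ha, ← hb, h]
      exact hep1
    obtain ⟨t, ht⟩ := Fin.exists_succAbove_eq hbp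
    have hdt : d t = i := by
      show r3.succAbove (r2'.succAbove (p1.succAbove t)) = i
      rw [ht, hb, ha]
    have hz := gdet_eq_zero B d c1 i t hdt
    simp [hf, hz]
  rw [Finset.sum_insert (by simp [hne12, hne13]),
      Finset.sum_insert (by simp [hne23]), Finset.sum_singleton, hsum] at h0
  -- sign computations
  have hb1 : 1 ≤ (r2:ℕ) := by omega
  have hc2 : 2 ≤ (r3:ℕ) := by omega
  set x : R := (-1:R)^(k+2) with hx
  have s1 : (-1:R)^((r1:ℕ)+(k+2)) * (-1:R)^((p1:ℕ)) = x := by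
    rw [hx, ← pow_add, show (r1:ℕ)+(k+2)+(p1:ℕ) = 2*(r1:ℕ) + (k+2) by omega,
      pow_add, pow_mul]
    simp
  have s2 : (-1:R)^((r2:ℕ)+(k+2)) * (-1:R)^((p2:ℕ)) = -x := by
    rw [hx, ← pow_add, show (r2:ℕ)+(k+2)+(p2:ℕ) = 2*((r2:ℕ)-1) + (k+3) by omega,
      pow_add, pow_mul]
    simp [pow_succ]
  have s3 : (-1:R)^((r3:ℕ)+(k+2)) * (-1:R)^((p3:ℕ)) = x := by
    rw [hx, ← pow_add, show (r3:ℕ)+(k+2)+(p3:ℕ) = 2*((r3:ℕ)-1) + (k+2) by omega,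
      pow_add, pow_mul]
    simp
  have H1 : f r1 = x * (Q23 * P1) := by
    rw [hf]
    simp only
    rw [hg1, ← hP1, ← s1]
    ring
  have H2 : f r2 = -x * (Q13 * P2) := by
    rw [hf]
    simp only
    rw [hg2, ← hP2, ← s2]
    ring
  have H3 : f r3 = x * (Q12 * P3) := by
    rw [hf]
    simp only
    rw [hg3, ← hP3, ← s3]
    ring
  rw [H1, H2, H3] at h0
  have hxx : x * x = 1 := by
    rw [hx, ← pow_add, ← two_mul, pow_mul]
    simp
  have final : P1 * Q23 = P2 * Q13 - P3 * Q12 := by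
    linear_combination x * h0 - (Q23*P1 - Q13*P2 + Q12*P3) * hxx
  exact final

set_option maxHeartbeats 1000000 in
/-- Non-square variant of the Desnanot–Jacobi identity for a matrix with one more
row than columns. Here `m = k+2 ≥ 2`. -/
theorem desnanot_jacobi_nonsquare {R : Type*} [CommRing R] (k : ℕ)
    (B : Matrix (Fin (k+3)) (Fin (k+2)) R)
    (r1 r2 r3 : Fin (k+3)) (h12 : r1 < r2) (h23 : r2 < r3) (c1 : Fin (k+2)) :
    (B.submatrix r1.succAbove id).det *
      (B.submatrix
        (r3.succAbove ∘ (⟨r2.1, by have h3 := r3.2; have h : r2.1 < r3.1 := h23; omega⟩ : Fin (k+2)).succAbove)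
        c1.succAbove).det =
    (B.submatrix r2.succAbove id).det *
      (B.submatrix
        (r3.succAbove ∘ (⟨r1.1, by have h3 := r3.2; have h : r1.1 < r3.1 := lt_trans h12 h23; omega⟩ : Fin (k+2)).succAbove)
        c1.succAbove).det -
    (B.submatrix r3.succAbove id).det *
      (B.submatrix
        (r2.succAbove ∘ (⟨r1.1, by have h2 := r2.2; have h : r1.1 < r2.1 := h12; omega⟩ : Fin (k+2)).succAbove)
        c1.succAbove).det := by
  have h12' : (r1:ℕ) < (r2:ℕ) := h12
  have h23' : (r2:ℕ) < (r3:ℕ) := h23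
  have h3 : (r3:ℕ) < k+3 := r3.isLt
  exact dj_core B r1 r2 r3 h12 h23 c1 ⟨r1.1, by omega⟩ ⟨r2.1, by omega⟩
    ⟨r1.1, by omega⟩ ⟨r2.1 - 1, by omega⟩ ⟨r3.1 - 2, by omega⟩ rfl rfl rfl rfl rfl
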